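/- Let G be a controllable graph on n vertices with adjacency matrix A. Then G is determined by its generalized spectrum (i.e., every graph H on n vertices such that A(H) is cospectral with A(G) and the complement of H is cospectral with the complement of G is isomorphic to G) if and only if every rational orthogonal n×n matrix Q satisfying Qe = e for the all-ones vector e and such that QᵀAQ is a symmetric (0,1)-matrix with zero diagonal is a permutation matrix. -/

import Mathlib

open Matrix

open scoped Classical in
/-- The (0,1)-adjacency matrix of a simple graph on `Fin n`, with entries in `R`. -/
noncomputable def adjMat {n : ℕ} (R : Type*) [Zero R] [One R] (G : SimpleGraph (Fin n)) :
    Matrix (Fin n) (Fin n) R :=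
  Matrix.of fun i j => if G.Adj i j then 1 else 0

/-- The walk matrix `W = [e, Ae, A²e, …, A^{n−1}e]` of a square matrix `A`,
where `e` is the all-ones vector: the `j`-th column is `A^j e`. -/
noncomputable def walkMatrix {R : Type*} [CommRing R] {n : ℕ} (A : Matrix (Fin n) (Fin n) R) :
    Matrix (Fin n) (Fin n) R :=
  Matrix.of fun i j => (A ^ (j : ℕ) *ᵥ fun _ => 1) i

open Polynomial Finset

namespace Stmt1Aux

variable {n : ℕ}

open scoped Classical

lemma adjMat_apply (G : SimpleGraph (Fin n)) (i j : Fin n) :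
    adjMat ℚ G i j = if G.Adj i j then 1 else 0 := by
  simp [adjMat]

lemma adjMat_isSymm (G : SimpleGraph (Fin n)) : (adjMat ℚ G).IsSymm := by
  ext i j
  simp only [transpose_apply, adjMat_apply]
  congr 1
  simp [SimpleGraph.adj_comm]

lemma adjMat_diag (G : SimpleGraph (Fin n)) (i : Fin n) : adjMat ℚ G i i = 0 := by
  simp [adjMat_apply]

lemma adjMat_zero_or_one (G : SimpleGraph (Fin n)) (i j : Fin n) :
    adjMat ℚ G i j = 0 ∨ adjMat ℚ G i j = 1 := by
  rw [adjMat_apply]; split_ifs <;> simp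

lemma adjMat_compl (G : SimpleGraph (Fin n)) :
    adjMat ℚ (Gᶜ) = (Matrix.of fun _ _ => (1:ℚ)) - 1 - adjMat ℚ G := by
  ext i j
  simp only [adjMat_apply, Matrix.sub_apply, of_apply, SimpleGraph.compl_adj]
  by_cases h : i = j
  · subst h; simp [one_apply]
  · by_cases h2 : G.Adj i j <;> simp [h, h2, one_apply, Ne.symm]

/-- the graph with adjacency matrix `B` -/
def graphOf (B : Matrix (Fin n) (Fin n) ℚ) (hs : B.IsSymm) : SimpleGraph (Fin n) where
  Adj i j := i ≠ j ∧ B i j = 1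
  symm := by
    constructor
    rintro i j ⟨h1, h2⟩
    exact ⟨h1.symm, by rw [← hs.apply]; exact h2⟩
  loopless := ⟨fun i h => h.1 rfl⟩

lemma adjMat_graphOf (B : Matrix (Fin n) (Fin n) ℚ) (hs : B.IsSymm)
    (h01 : ∀ i j, B i j = 0 ∨ B i j = 1) (hd : ∀ i, B i i = 0) :
    adjMat ℚ (graphOf B hs) = B := by
  ext i j
  rw [adjMat_apply]
  by_cases h : i = j
  · subst h; simp [graphOf, hd i]
  · rcases h01 i j with h0 | h1
    · simp [graphOf, h, h0]
    · simp [graphOf, h, h1]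

lemma charpoly_conj (Q M : Matrix (Fin n) (Fin n) ℚ) (hQ : Qᵀ * Q = 1) :
    (Qᵀ * M * Q).charpoly = M.charpoly := by
  have hcm : charmatrix (Qᵀ * M * Q) =
      (C : ℚ →+* ℚ[X]).mapMatrix Qᵀ * charmatrix M * (C : ℚ →+* ℚ[X]).mapMatrix Q := by
    unfold charmatrix
    rw [Matrix.mul_sub, Matrix.sub_mul]
    congr 1
    · rw [show (C : ℚ →+* ℚ[X]).mapMatrix Qᵀ * (scalar (Fin n)) X =
          (scalar (Fin n)) X * (C : ℚ →+* ℚ[X]).mapMatrix Qᵀ from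
          (scalar_commute (X : ℚ[X]) (Commute.all _) _).symm]
      rw [Matrix.mul_assoc, ← _root_.map_mul, hQ]
      simp
    · simp [← _root_.map_mul, Matrix.mul_assoc]
  have h1 : ((C : ℚ →+* ℚ[X]).mapMatrix Qᵀ).det * ((C : ℚ →+* ℚ[X]).mapMatrix Q).det = 1 := by
    rw [← det_mul, ← _root_.map_mul, hQ]
    simp
  unfold Matrix.charpoly
  rw [hcm, det_mul, det_mul, mul_right_comm, h1, one_mul]

lemma eval_charpoly (M : Matrix (Fin n) (Fin n) ℚ) (x : ℚ) :
    M.charpoly.eval x = (x • (1 : Matrix (Fin n) (Fin n) ℚ) - M).det := by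
  unfold Matrix.charpoly
  rw [← coe_evalRingHom, RingHom.map_det]
  congr 1
  ext i j
  by_cases h : i = j
  · subst h; simp [charmatrix_apply_eq, Matrix.one_apply, Matrix.smul_apply]
  · simp [charmatrix_apply_ne _ _ _ h, Matrix.one_apply_ne h, h, Matrix.smul_apply]

lemma permMatrix_transpose (σ : Equiv.Perm (Fin n)) :
    (σ.permMatrix ℚ)ᵀ = (σ.symm.toPEquiv.toMatrix : Matrix (Fin n) (Fin n) ℚ) := by
  rw [Equiv.toPEquiv_symm, PEquiv.toMatrix_symm]

lemma permMatrix_orth (σ : Equiv.Perm (Fin n)) :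
    (σ.permMatrix ℚ)ᵀ * σ.permMatrix ℚ = 1 := by
  rw [permMatrix_transpose]
  show σ.symm.toPEquiv.toMatrix * σ.toPEquiv.toMatrix = 1
  rw [← PEquiv.toMatrix_trans, ← Equiv.toPEquiv_trans]
  simp

lemma perm_conj_apply (σ : Equiv.Perm (Fin n)) (M : Matrix (Fin n) (Fin n) ℚ) (i j : Fin n) :
    ((σ.permMatrix ℚ)ᵀ * M * (σ.permMatrix ℚ)) i j = M (σ.symm i) (σ.symm j) := by
  have h : (σ.permMatrix ℚ)ᵀ * M * (σ.permMatrix ℚ)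
      = ((M.submatrix id σ.symm).submatrix σ.symm id) := by
    rw [Matrix.mul_assoc, permMatrix_transpose, PEquiv.mul_toMatrix_toPEquiv,
      PEquiv.toMatrix_toPEquiv_mul]
  rw [h]
  simp

lemma permMatrix_mulVec_one (σ : Equiv.Perm (Fin n)) :
    (σ.permMatrix ℚ) *ᵥ (fun _ => 1) = (fun _ => 1) := by
  funext i
  show (σ.toPEquiv.toMatrix *ᵥ _) i = _
  simp only [Matrix.mulVec, dotProduct, PEquiv.toMatrix_apply,
    Equiv.toPEquiv_apply, Option.mem_def, Option.some.injEq, mul_one]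
  rw [Finset.sum_eq_single (σ i)] <;> simp +contextual [eq_comm]

lemma dot_sum_mulVec (s : Finset ℕ) (f : ℕ → Matrix (Fin n) (Fin n) ℚ) (u v : Fin n → ℚ) :
    u ⬝ᵥ ((∑ i ∈ s, f i) *ᵥ v) = ∑ i ∈ s, u ⬝ᵥ (f i *ᵥ v) := by
  classical
  induction s using Finset.induction_on with
  | empty => simp [Matrix.zero_mulVec]
  | insert _ _ h ih =>
      rw [Finset.sum_insert h, Finset.sum_insert h, Matrix.add_mulVec, dotProduct_add, ih]

lemma dot_smul_mulVec (c : ℚ) (M : Matrix (Fin n) (Fin n) ℚ) (u v : Fin n → ℚ) :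
    u ⬝ᵥ ((c • M) *ᵥ v) = c * (u ⬝ᵥ (M *ᵥ v)) := by
  rw [Matrix.smul_mulVec, dotProduct_smul, smul_eq_mul]

lemma key_div (M : Matrix (Fin n) (Fin n) ℚ) (y : ℚ) :
    (y • (1 : Matrix (Fin n) (Fin n) ℚ) - M) *
      (∑ i ∈ Finset.range n, y ^ i •
        ∑ j ∈ Finset.Ico (i+1) (n+1), M.charpoly.coeff j • M ^ (j - 1 - i)) =
    M.charpoly.eval y • 1 := by
  set p := M.charpoly with hp
  set c : ℕ → ℚ := fun j => p.coeff j with hc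
  set D : ℕ → Matrix (Fin n) (Fin n) ℚ :=
    fun i => ∑ j ∈ Finset.Ico (i+1) (n+1), c j • M ^ (j - 1 - i) with hDdef
  have hdeg : p.natDegree = n := by
    rw [hp, Matrix.charpoly_natDegree_eq_dim, Fintype.card_fin]
  have hCH : ∑ j ∈ Finset.range (n+1), c j • M ^ j = 0 := by
    have h := Matrix.aeval_self_charpoly M
    rwa [Polynomial.aeval_eq_sum_range, hdeg] at h
  have hDn : D n = 0 := by simp [hDdef]
  have hrec : ∀ i, i < n → D i = c (i+1) • 1 + M * D (i+1) := by
    intro i hi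
    rw [hDdef]
    simp only []
    rw [Finset.sum_eq_sum_Ico_succ_bot (by omega : i + 1 < n + 1)]
    congr 1
    · simp
    · rw [Finset.mul_sum]
      apply Finset.sum_congr rfl
      intro j hj
      simp only [Finset.mem_Ico] at hj
      rw [mul_smul_comm, ← pow_succ']
      congr 2
      omega
  have hD0 : M * D 0 = -(c 0 • 1) := by
    have h1 : M * D 0 = ∑ j ∈ Finset.Ico 1 (n+1), c j • M ^ j := by
      rw [hDdef]
      simp only []
      rw [Finset.mul_sum]
      apply Finset.sum_congr rfl
      intro j hj
      simp only [Finset.mem_Ico] at hj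
      rw [mul_smul_comm, ← pow_succ']
      congr 2
      omega
    have h2 : ∑ j ∈ Finset.range (n+1), c j • M ^ j
        = c 0 • 1 + ∑ j ∈ Finset.Ico 1 (n+1), c j • M ^ j := by
      rw [Finset.range_eq_Ico, Finset.sum_eq_sum_Ico_succ_bot (by omega : 0 < n + 1)]
      simp
    rw [h2] at hCH
    rw [h1]
    exact eq_neg_of_add_eq_zero_right hCH
  set g : ℕ → Matrix (Fin n) (Fin n) ℚ := fun i => y ^ i • (M * D i) with hg
  have lhs_eq : (y • (1 : Matrix (Fin n) (Fin n) ℚ) - M) * (∑ i ∈ Finset.range n, y ^ i • D i)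
      = ∑ i ∈ Finset.range n, (y ^ (i+1) • D i) - ∑ i ∈ Finset.range n, g i := by
    rw [Matrix.sub_mul, Finset.mul_sum, Finset.mul_sum]
    congr 1
    · apply Finset.sum_congr rfl
      intro i _
      rw [smul_mul_assoc, one_mul, smul_smul, ← pow_succ']
    · apply Finset.sum_congr rfl
      intro i _
      rw [mul_smul_comm]
  have tel : ∑ i ∈ Finset.range n, (y ^ (i+1) • D i)
      = (∑ i ∈ Finset.range n, ((c (i+1) * y ^ (i+1)) • (1 : Matrix (Fin n) (Fin n) ℚ)))
        + ∑ i ∈ Finset.range n, g (i+1) := by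
    rw [← Finset.sum_add_distrib]
    apply Finset.sum_congr rfl
    intro i hi
    rw [hrec i (Finset.mem_range.mp hi), smul_add, smul_smul, mul_comm (y ^ (i+1))]
  have ht : ∑ i ∈ Finset.range n, g (i+1) - ∑ i ∈ Finset.range n, g i = g n - g 0 := by
    rw [← Finset.sum_sub_distrib, Finset.sum_range_sub]
  have hgn : g n = 0 := by simp [hg, hDn]
  have hg0 : g 0 = -(c 0 • (1 : Matrix (Fin n) (Fin n) ℚ)) := by simp [hg, hD0]
  rw [lhs_eq, tel, add_sub_assoc, ht, hgn, hg0, Polynomial.eval_eq_sum_range, hdeg,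
    Finset.sum_range_succ' (fun i => c i * y ^ i) n, add_smul, Finset.sum_smul,
    pow_zero, mul_one]
  simp

lemma charpoly_neg_congr {A B : Matrix (Fin n) (Fin n) ℚ} (h : B.charpoly = A.charpoly) :
    (-B).charpoly = (-A).charpoly := by
  apply Polynomial.funext
  intro x
  have key : ∀ M : Matrix (Fin n) (Fin n) ℚ,
      (-M).charpoly.eval x = (-1:ℚ)^n * M.charpoly.eval (-x) := by
    intro M
    rw [eval_charpoly, eval_charpoly]
    rw [show x • (1 : Matrix (Fin n) (Fin n) ℚ) - -M
        = (-1 : ℚ) • ((-x) • (1 : Matrix (Fin n) (Fin n) ℚ) - M) by module]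
    rw [Matrix.det_smul, Fintype.card_fin]
  rw [key, key, h]

/-- The per-point determinant identity for the complement. -/
lemma complement_eval (M : Matrix (Fin n) (Fin n) ℚ) (z : ℚ)
    (hz : (-M).charpoly.eval z ≠ 0) :
    ((Matrix.of fun _ _ => (1:ℚ)) - 1 - M).charpoly.eval (z - 1)
      = (-M).charpoly.eval z
        - ∑ i ∈ Finset.range n,
            (∑ j ∈ Finset.Ico (i+1) (n+1), (-M).charpoly.coeff j *
              ((fun _ => (1:ℚ)) ⬝ᵥ ((-M) ^ (j - 1 - i) *ᵥ fun _ => 1))) * z ^ i := by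
  set e : Fin n → ℚ := fun _ => 1 with he
  set J : Matrix (Fin n) (Fin n) ℚ := Matrix.of fun _ _ => (1:ℚ) with hJ
  set q := (-M).charpoly with hq
  set N : Matrix (Fin n) (Fin n) ℚ := z • 1 + M with hN
  set D : ℕ → Matrix (Fin n) (Fin n) ℚ :=
    fun i => ∑ j ∈ Finset.Ico (i+1) (n+1), q.coeff j • (-M) ^ (j - 1 - i) with hD
  set E : Matrix (Fin n) (Fin n) ℚ := ∑ i ∈ Finset.range n, z ^ i • D i with hE
  have hNE : N * E = q.eval z • 1 := by
    have h := key_div (-M) z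
    rwa [sub_neg_eq_add] at h
  have hdet : N.det = q.eval z := by
    rw [show N = z • (1 : Matrix (Fin n) (Fin n) ℚ) - -M by rw [hN, sub_neg_eq_add],
      ← eval_charpoly]
  have hunit : IsUnit N.det := by rw [hdet]; exact hz.isUnit
  have hNinv : N⁻¹ = (q.eval z)⁻¹ • E := by
    have h : N * ((q.eval z)⁻¹ • E) = 1 := by
      rw [mul_smul_comm, hNE, smul_smul, inv_mul_cancel₀ hz, one_smul]
    exact Matrix.inv_eq_right_inv h
  have hmat : (z - 1) • (1 : Matrix (Fin n) (Fin n) ℚ) - (J - 1 - M) = N - J := by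
    rw [hN, sub_smul, one_smul]
    abel
  have hJcr : J = Matrix.replicateCol Unit e * Matrix.replicateRow Unit e := by
    ext i j
    simp [hJ, Matrix.mul_apply, Matrix.replicateCol, Matrix.replicateRow, he]
  have hfact : N - J = N * (1 + Matrix.replicateCol Unit (-(N⁻¹ *ᵥ e)) * Matrix.replicateRow Unit e) := by
    rw [Matrix.mul_add, mul_one, ← Matrix.mul_assoc, ← Matrix.replicateCol_mulVec,
      Matrix.mulVec_neg, Matrix.mulVec_mulVec, Matrix.mul_nonsing_inv _ hunit,
      Matrix.one_mulVec]
    rw [show Matrix.replicateCol Unit (-e) = -Matrix.replicateCol Unit e by ext i j; simp [Matrix.replicateCol]]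
    rw [Matrix.neg_mul, ← hJcr]
    abel
  have hdetNJ : (N - J).det = q.eval z * (1 - e ⬝ᵥ (N⁻¹ *ᵥ e)) := by
    rw [hfact, det_mul, hdet, Matrix.det_one_add_replicateCol_mul_replicateRow, dotProduct_neg,
      ← sub_eq_add_neg]
  have hdots : e ⬝ᵥ (N⁻¹ *ᵥ e) = (q.eval z)⁻¹ *
      ∑ i ∈ Finset.range n,
        (∑ j ∈ Finset.Ico (i+1) (n+1), q.coeff j * (e ⬝ᵥ ((-M) ^ (j - 1 - i) *ᵥ e))) * z ^ i := by
    rw [hNinv, dot_smul_mulVec]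
    congr 1
    rw [hE, dot_sum_mulVec]
    apply Finset.sum_congr rfl
    intro i _
    rw [dot_smul_mulVec]
    simp only [hD]
    rw [dot_sum_mulVec, mul_comm]
    congr 1
    apply Finset.sum_congr rfl
    intro j _
    rw [dot_smul_mulVec]
  rw [eval_charpoly, hmat, hdetNJ, hdots, mul_sub, mul_one, ← mul_assoc,
    mul_inv_cancel₀ hz, one_mul]

lemma moments_eq (A B : Matrix (Fin n) (Fin n) ℚ)
    (h1 : B.charpoly = A.charpoly)
    (h2 : ((Matrix.of fun _ _ => (1:ℚ)) - 1 - B).charpoly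
        = ((Matrix.of fun _ _ => (1:ℚ)) - 1 - A).charpoly) :
    ∀ k, (fun _ => (1:ℚ)) ⬝ᵥ (B ^ k *ᵥ fun _ => 1)
        = (fun _ => (1:ℚ)) ⬝ᵥ (A ^ k *ᵥ fun _ => 1) := by
  set e : Fin n → ℚ := fun _ => 1 with he
  set q := (-A).charpoly with hq
  have hqB : (-B).charpoly = q := charpoly_neg_congr h1
  have hdeg : q.natDegree = n := by
    rw [hq, Matrix.charpoly_natDegree_eq_dim, Fintype.card_fin]
  have hqmonic : q.Monic := Matrix.charpoly_monic _
  set sA : ℕ → ℚ := fun k => e ⬝ᵥ ((-A) ^ k *ᵥ e) with hsA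
  set sB : ℕ → ℚ := fun k => e ⬝ᵥ ((-B) ^ k *ᵥ e) with hsB
  set a : ℕ → ℚ := fun i => ∑ j ∈ Finset.Ico (i+1) (n+1), q.coeff j * sA (j-1-i) with ha
  set b : ℕ → ℚ := fun i => ∑ j ∈ Finset.Ico (i+1) (n+1), q.coeff j * sB (j-1-i) with hb
  have hpoint : ∀ z : ℚ, q.eval z ≠ 0 →
      ∑ i ∈ Finset.range n, a i * z ^ i = ∑ i ∈ Finset.range n, b i * z ^ i := by
    intro z hz
    have hA' := complement_eval A z (by rwa [← hq])
    have hB' := complement_eval B z (by rwa [hqB])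
    rw [← hq] at hA'
    rw [hqB] at hB'
    rw [h2, hA'] at hB'
    simp only [ha, hb, hsA, hsB]
    linarith [hB']
  have hfin : {z : ℚ | q.eval z = 0}.Finite :=
    Polynomial.finite_setOf_isRoot (hqmonic.ne_zero)
  have hinf : {z : ℚ | q.eval z ≠ 0}.Infinite := by
    have h := hfin.infinite_compl
    convert h using 1
    ext; simp
  have hab : ∀ i, i < n → a i = b i := by
    set P : Polynomial ℚ :=
      ∑ i ∈ Finset.range n, Polynomial.C (a i - b i) * Polynomial.X ^ i with hP
    have hP0 : P = 0 := by
      apply Polynomial.eq_zero_of_infinite_isRoot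
      apply hinf.mono
      intro z hz
      simp only [Set.mem_setOf_eq] at hz ⊢
      have h := hpoint z hz
      simp only [Polynomial.IsRoot, hP, Polynomial.eval_finset_sum, Polynomial.eval_mul,
        Polynomial.eval_C, Polynomial.eval_pow, Polynomial.eval_X, sub_mul]
      rw [Finset.sum_sub_distrib, h, sub_self]
    intro i hi
    have hco := congrArg (fun r => Polynomial.coeff r i) hP0
    simp only [hP, Polynomial.finset_sum_coeff, Polynomial.coeff_C_mul,
      Polynomial.coeff_X_pow, Polynomial.coeff_zero, mul_ite, mul_one, mul_zero] at hco
    rw [Finset.sum_ite_eq (Finset.range n) i (fun j => a j - b j)] at hco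
    simp only [Finset.mem_range, hi, if_true] at hco
    linarith [hco]
  have hs_lt : ∀ m, m < n → sB m = sA m := by
    intro m
    induction m using Nat.strong_induction_on with
    | _ m ih =>
      intro hm
      have h := hab (n-1-m) (by omega)
      have hsplit : ∀ (s : ℕ → ℚ),
          (∑ j ∈ Finset.Ico (n-1-m+1) (n+1), q.coeff j * s (j-1-(n-1-m)))
          = (∑ j ∈ Finset.Ico (n-1-m+1) n, q.coeff j * s (j-1-(n-1-m)))
            + q.coeff n * s m := by
        intro s
        rw [Finset.sum_Ico_succ_top (by omega : n-1-m+1 ≤ n),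
          show n - 1 - (n-1-m) = m by omega]
      have hcn : q.coeff n = 1 := by
        have h := hqmonic.coeff_natDegree
        rwa [hdeg] at h
      simp only [ha, hb] at h
      rw [hsplit sA, hsplit sB, hcn, one_mul, one_mul] at h
      have hlow : ∑ j ∈ Finset.Ico (n-1-m+1) n, q.coeff j * sB (j-1-(n-1-m))
          = ∑ j ∈ Finset.Ico (n-1-m+1) n, q.coeff j * sA (j-1-(n-1-m)) := by
        apply Finset.sum_congr rfl
        intro j hj
        have hj' := Finset.mem_Ico.mp hj
        rw [ih (j-1-(n-1-m)) (by omega) (by omega)]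
      rw [hlow] at h
      linarith [h]
  have hs_lt' : ∀ m, m < n → e ⬝ᵥ (B ^ m *ᵥ e) = e ⬝ᵥ (A ^ m *ᵥ e) := by
    intro m hm
    have h := hs_lt m hm
    have hexp : ∀ M : Matrix (Fin n) (Fin n) ℚ, (-M) ^ m = ((-1:ℚ)^m) • M ^ m := by
      intro M
      rw [← neg_one_smul ℚ M, _root_.smul_pow]
    simp only [hsA, hsB, hexp, dot_smul_mulVec] at h
    exact mul_left_cancel₀ (pow_ne_zero m (by norm_num : (-1:ℚ) ≠ 0)) h
  rcases Nat.eq_zero_or_pos n with hn | hn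
  · intro k
    subst hn
    simp [dotProduct]
  · have hpow : ∀ (M : Matrix (Fin n) (Fin n) ℚ), M.charpoly = A.charpoly →
        M ^ n = ∑ j ∈ Finset.range n, (-(A.charpoly.coeff j)) • M ^ j := by
      intro M hM
      have h := Matrix.aeval_self_charpoly M
      rw [Polynomial.aeval_eq_sum_range, Matrix.charpoly_natDegree_eq_dim, Fintype.card_fin,
        Finset.sum_range_succ, hM] at h
      have hcn : A.charpoly.coeff n = 1 := by
        have h' := (Matrix.charpoly_monic A).coeff_natDegree
        rwa [Matrix.charpoly_natDegree_eq_dim, Fintype.card_fin] at h'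
      rw [hcn, one_smul] at h
      have h' := eq_neg_of_add_eq_zero_right h
      rw [h', ← Finset.sum_neg_distrib]
      apply Finset.sum_congr rfl
      intro j _
      rw [neg_smul]
    intro k
    induction k using Nat.strong_induction_on with
    | _ k ih =>
      by_cases hk : k < n
      · exact hs_lt' k hk
      · push_neg at hk
        have hrw : ∀ (M : Matrix (Fin n) (Fin n) ℚ), M.charpoly = A.charpoly →
            M ^ k = ∑ j ∈ Finset.range n, (-(A.charpoly.coeff j)) • M ^ (k - n + j) := by
          intro M hM
          conv_lhs => rw [show k = k - n + n from (Nat.sub_add_cancel hk).symm, pow_add]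
          rw [hpow M hM, Finset.mul_sum]
          apply Finset.sum_congr rfl
          intro j _
          rw [mul_smul_comm, ← pow_add]
        rw [hrw A rfl, hrw B h1, dot_sum_mulVec, dot_sum_mulVec]
        apply Finset.sum_congr rfl
        intro j hj
        have hj' := Finset.mem_range.mp hj
        rw [dot_smul_mulVec, dot_smul_mulVec, ih (k-n+j) (by omega)]

lemma sum_mulVec' (s : Finset ℕ) (f : ℕ → Matrix (Fin n) (Fin n) ℚ) (v : Fin n → ℚ) :
    (∑ i ∈ s, f i) *ᵥ v = ∑ i ∈ s, f i *ᵥ v := by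
  classical
  induction s using Finset.induction_on with
  | empty => simp [Matrix.zero_mulVec]
  | insert _ _ h ih => rw [Finset.sum_insert h, Finset.sum_insert h, Matrix.add_mulVec, ih]

lemma mulVec_sum' (s : Finset ℕ) (Q : Matrix (Fin n) (Fin n) ℚ) (v : ℕ → Fin n → ℚ) :
    Q *ᵥ (∑ i ∈ s, v i) = ∑ i ∈ s, Q *ᵥ v i := by
  classical
  induction s using Finset.induction_on with
  | empty => simp [Matrix.mulVec_zero]
  | insert _ _ h ih => rw [Finset.sum_insert h, Finset.sum_insert h, Matrix.mulVec_add, ih]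

lemma pow_reduce {A : Matrix (Fin n) (Fin n) ℚ} (M : Matrix (Fin n) (Fin n) ℚ)
    (hM : M.charpoly = A.charpoly) {k : ℕ} (hk : n ≤ k) :
    M ^ k = ∑ j ∈ Finset.range n, (-(A.charpoly.coeff j)) • M ^ (k - n + j) := by
  have hpow : M ^ n = ∑ j ∈ Finset.range n, (-(A.charpoly.coeff j)) • M ^ j := by
    have h := Matrix.aeval_self_charpoly M
    rw [Polynomial.aeval_eq_sum_range, Matrix.charpoly_natDegree_eq_dim, Fintype.card_fin,
      Finset.sum_range_succ, hM] at h
    have hcn : A.charpoly.coeff n = 1 := by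
      have h' := (Matrix.charpoly_monic A).coeff_natDegree
      rwa [Matrix.charpoly_natDegree_eq_dim, Fintype.card_fin] at h'
    rw [hcn, one_smul] at h
    have h' := eq_neg_of_add_eq_zero_right h
    rw [h', ← Finset.sum_neg_distrib]
    apply Finset.sum_congr rfl
    intro j _
    rw [neg_smul]
  conv_lhs => rw [show k = k - n + n from (Nat.sub_add_cancel hk).symm, pow_add]
  rw [hpow, Finset.mul_sum]
  apply Finset.sum_congr rfl
  intro j _
  rw [mul_smul_comm, ← pow_add]

lemma dot_shift (M : Matrix (Fin n) (Fin n) ℚ) (hs : Mᵀ = M) (i j : ℕ) :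
    (M ^ i *ᵥ (fun _ => (1:ℚ))) ⬝ᵥ (M ^ j *ᵥ (fun _ => (1:ℚ)))
      = (fun _ => (1:ℚ)) ⬝ᵥ (M ^ (i+j) *ᵥ (fun _ => (1:ℚ))) := by
  have hpt : (M ^ i)ᵀ = M ^ i := by rw [Matrix.transpose_pow, hs]
  rw [pow_add, ← Matrix.mulVec_mulVec, Matrix.dotProduct_mulVec
    (fun _ => (1:ℚ)) (M ^ i) (M ^ j *ᵥ fun _ => (1:ℚ))]
  congr 1
  rw [← Matrix.mulVec_transpose, hpt]

lemma gram_eq (A B : Matrix (Fin n) (Fin n) ℚ) (hAs : Aᵀ = A) (hBs : Bᵀ = B)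
    (hmom : ∀ k, (fun _ => (1:ℚ)) ⬝ᵥ (B ^ k *ᵥ fun _ => 1)
        = (fun _ => (1:ℚ)) ⬝ᵥ (A ^ k *ᵥ fun _ => 1)) :
    (walkMatrix B)ᵀ * walkMatrix B = (walkMatrix A)ᵀ * walkMatrix A := by
  ext i j
  have h := hmom ((i:ℕ) + (j:ℕ))
  rw [← dot_shift A hAs, ← dot_shift B hBs] at h
  simpa [Matrix.mul_apply, Matrix.transpose_apply, dotProduct, walkMatrix] using h

lemma iff_of_ite {p q : Prop} [Decidable p] [Decidable q]
    (h : (if p then (1:ℚ) else 0) = if q then (1:ℚ) else 0) : p ↔ q := by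
  by_cases hp : p <;> by_cases hq : q <;> simp_all

lemma entry_eq (M : Matrix (Fin n) (Fin n) ℚ) (i j : Fin n) :
    M i j = (M *ᵥ Pi.single j 1) i := by
  rw [Matrix.mulVec_single]
  simp

lemma walk_col (M : Matrix (Fin n) (Fin n) ℚ) (j : Fin n) :
    walkMatrix M *ᵥ Pi.single j 1 = M ^ (j:ℕ) *ᵥ (fun _ => 1) := by
  funext i
  rw [Matrix.mulVec_single]
  simp [walkMatrix]

end Stmt1Aux

open Stmt1Aux

/-- A controllable graph `G` is determined by its generalized spectrum
iff every rational orthogonal matrix `Q` with `Qe = e` such that `QᵀAQ` is a symmetric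
(0,1)-matrix with zero diagonal is a permutation matrix. -/
theorem stmt_1 {n : ℕ} (G : SimpleGraph (Fin n))
    (A : Matrix (Fin n) (Fin n) ℚ) (hA : A = adjMat ℚ G)
    (hctrl : (walkMatrix A).det ≠ 0) :
    (∀ H : SimpleGraph (Fin n),
        (adjMat ℚ H).charpoly = A.charpoly →
        (adjMat ℚ (Hᶜ)).charpoly = (adjMat ℚ (Gᶜ)).charpoly →
        Nonempty (G ≃g H)) ↔
      (∀ Q : Matrix (Fin n) (Fin n) ℚ,
        Qᵀ * Q = 1 → Q *ᵥ (fun _ => 1) = (fun _ => 1) →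
        (Qᵀ * A * Q).IsSymm →
        (∀ i j, (Qᵀ * A * Q) i j = 0 ∨ (Qᵀ * A * Q) i j = 1) →
        (∀ i, (Qᵀ * A * Q) i i = 0) →
        ∃ σ : Equiv.Perm (Fin n), Q = σ.permMatrix ℚ) := by
  rcases Nat.eq_zero_or_pos n with hn | hn
  · subst hn
    constructor
    · intro _ Q _ _ _ _ _
      refine ⟨Equiv.refl _, ?_⟩
      ext i j
      exact i.elim0
    · intro _ H _ _
      exact ⟨⟨Equiv.refl _, fun {a b} => a.elim0⟩⟩
  constructor
  · -- DGS → permutation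
    intro hDGS Q hQ1 hQe hsym h01 hdiag
    classical
    set B := Qᵀ * A * Q with hB
    set H := graphOf B hsym with hH
    have hBH : adjMat ℚ H = B := adjMat_graphOf B hsym h01 hdiag
    have hchar : (adjMat ℚ H).charpoly = A.charpoly := by
      rw [hBH, hB]; exact charpoly_conj Q A hQ1
    have hQQT : Q * Qᵀ = 1 := mul_eq_one_comm.mp hQ1
    have hQte : Qᵀ *ᵥ (fun _ => (1:ℚ)) = fun _ => 1 := by
      conv_lhs => rw [← hQe]
      rw [Matrix.mulVec_mulVec, hQ1, Matrix.one_mulVec]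
    have hJcr : (Matrix.of fun _ _ => (1:ℚ) : Matrix (Fin n) (Fin n) ℚ)
        = Matrix.replicateCol Unit (fun _ : Fin n => (1:ℚ)) * Matrix.replicateRow Unit (fun _ : Fin n => (1:ℚ)) := by
      ext i j
      simp [Matrix.mul_apply, Matrix.replicateCol, Matrix.replicateRow]
    have hJconj : Qᵀ * (Matrix.of fun _ _ => (1:ℚ)) * Q = Matrix.of fun _ _ => (1:ℚ) := by
      rw [hJcr, ← Matrix.mul_assoc, ← Matrix.replicateCol_mulVec, hQte, Matrix.mul_assoc]
      rw [show Matrix.replicateRow Unit (fun _ : Fin n => (1:ℚ)) * Q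
          = Matrix.replicateRow Unit ((fun _ : Fin n => (1:ℚ)) ᵥ* Q) from (Matrix.replicateRow_vecMul _ _).symm]
      rw [show (fun _ : Fin n => (1:ℚ)) ᵥ* Q = Qᵀ *ᵥ (fun _ => (1:ℚ)) from
        (Matrix.mulVec_transpose Q _).symm, hQte]
    have hcompl : adjMat ℚ (Hᶜ) = Qᵀ * adjMat ℚ (Gᶜ) * Q := by
      rw [adjMat_compl H, adjMat_compl G, ← hA, hBH]
      rw [Matrix.mul_sub, Matrix.mul_sub, Matrix.sub_mul, Matrix.sub_mul, hJconj,
        Matrix.mul_one, hQ1, hB]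
    have hcomp_char : (adjMat ℚ (Hᶜ)).charpoly = (adjMat ℚ (Gᶜ)).charpoly := by
      rw [hcompl]; exact charpoly_conj _ _ hQ1
    obtain ⟨φ⟩ := hDGS H hchar hcomp_char
    set σ : Equiv.Perm (Fin n) := φ.toEquiv with hσ
    set P := σ.permMatrix ℚ with hPdef
    have hPA : Pᵀ * A * P = B := by
      ext i j
      rw [hPdef, perm_conj_apply, ← hBH, hA, adjMat_apply, adjMat_apply]
      refine if_congr ?_ rfl rfl
      exact φ.symm.map_adj_iff
    have hPo : Pᵀ * P = 1 := permMatrix_orth σ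
    have hPPT : P * Pᵀ = 1 := mul_eq_one_comm.mp hPo
    have hPte : Pᵀ *ᵥ (fun _ => (1:ℚ)) = fun _ => 1 := by
      rw [hPdef, permMatrix_transpose]
      exact permMatrix_mulVec_one σ.symm
    have hAQ : A * Q = Q * B := by
      rw [hB, ← Matrix.mul_assoc, ← Matrix.mul_assoc, hQQT, Matrix.one_mul]
    have hBPt : B * Pᵀ = Pᵀ * A := by
      rw [← hPA, Matrix.mul_assoc, hPPT, Matrix.mul_one]
    have hcomm : A * (Q * Pᵀ) = (Q * Pᵀ) * A := by
      calc A * (Q * Pᵀ) = A * Q * Pᵀ := (Matrix.mul_assoc _ _ _).symm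
        _ = Q * B * Pᵀ := by rw [hAQ]
        _ = Q * (B * Pᵀ) := Matrix.mul_assoc _ _ _
        _ = Q * (Pᵀ * A) := by rw [hBPt]
        _ = Q * Pᵀ * A := (Matrix.mul_assoc _ _ _).symm
    have hcommpow : ∀ k : ℕ, (Q * Pᵀ) * A ^ k = A ^ k * (Q * Pᵀ) :=
      fun k => (Commute.pow_right ((hcomm : Commute A (Q * Pᵀ)).symm) k).eq
    have hRe : (Q * Pᵀ) *ᵥ (fun _ => (1:ℚ)) = fun _ => 1 := by
      rw [← Matrix.mulVec_mulVec, hPte, hQe]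
    have hvec : ∀ j : Fin n, (Q * Pᵀ) *ᵥ (A ^ (j:ℕ) *ᵥ (fun _ => (1:ℚ)))
        = A ^ (j:ℕ) *ᵥ (fun _ => 1) := by
      intro j
      rw [Matrix.mulVec_mulVec, hcommpow (j:ℕ), ← Matrix.mulVec_mulVec, hRe]
    have hRW : (Q * Pᵀ) * walkMatrix A = walkMatrix A := by
      ext i j
      rw [entry_eq ((Q * Pᵀ) * walkMatrix A) i j, entry_eq (walkMatrix A) i j,
        ← Matrix.mulVec_mulVec, walk_col A j, hvec j]
    have hWu : IsUnit (walkMatrix A).det := isUnit_iff_ne_zero.mpr hctrl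
    have hR1 : Q * Pᵀ = 1 := by
      have h := congrArg (fun X => X * (walkMatrix A)⁻¹) hRW
      rwa [Matrix.mul_nonsing_inv_cancel_right _ _ hWu,
        Matrix.mul_nonsing_inv _ hWu] at h
    refine ⟨σ, ?_⟩
    have h := congrArg (fun X => X * P) hR1
    rwa [Matrix.mul_assoc, hPo, Matrix.mul_one, Matrix.one_mul] at h
  · -- permutation → DGS
    intro hQall H hchar hcompchar
    classical
    have hAs : Aᵀ = A := by rw [hA]; exact adjMat_isSymm G
    set B := adjMat ℚ H with hB
    have hBs : Bᵀ = B := adjMat_isSymm H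
    have hcomp' : ((Matrix.of fun _ _ => (1:ℚ)) - 1 - B).charpoly
        = ((Matrix.of fun _ _ => (1:ℚ)) - 1 - A).charpoly := by
      rw [show (Matrix.of fun _ _ => (1:ℚ)) - 1 - B = adjMat ℚ (Hᶜ) from
          by rw [adjMat_compl H, hB],
        show (Matrix.of fun _ _ => (1:ℚ)) - 1 - A = adjMat ℚ (Gᶜ) from
          by rw [adjMat_compl G, hA]]
      exact hcompchar
    have hmom := moments_eq A B hchar hcomp'
    have hgram := gram_eq A B hAs hBs hmom
    have hdetB : (walkMatrix B).det ≠ 0 := by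
      intro h0
      have h := congrArg Matrix.det hgram
      rw [Matrix.det_mul, Matrix.det_mul, Matrix.det_transpose, Matrix.det_transpose,
        h0, mul_zero] at h
      exact hctrl (mul_self_eq_zero.mp h.symm)
    have hWBu : IsUnit (walkMatrix B).det := isUnit_iff_ne_zero.mpr hdetB
    have hWBTu : IsUnit ((walkMatrix B)ᵀ).det := by
      rw [Matrix.det_transpose]; exact hWBu
    set Q := walkMatrix A * (walkMatrix B)⁻¹ with hQdef
    have hQWB : Q * walkMatrix B = walkMatrix A := by
      rw [hQdef, Matrix.nonsing_inv_mul_cancel_right _ _ hWBu]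
    have hQpow : ∀ k : ℕ, Q *ᵥ (B ^ k *ᵥ (fun _ => (1:ℚ))) = A ^ k *ᵥ (fun _ => 1) := by
      intro k
      induction k using Nat.strong_induction_on with
      | _ k ih =>
        by_cases hk : k < n
        · have h := congrArg (fun X => X *ᵥ Pi.single (⟨k, hk⟩ : Fin n) (1:ℚ)) hQWB
          rw [← Matrix.mulVec_mulVec, walk_col B ⟨k, hk⟩, walk_col A ⟨k, hk⟩] at h
          exact h
        · push_neg at hk
          rw [pow_reduce B hchar hk, pow_reduce A rfl hk, sum_mulVec', sum_mulVec',
            mulVec_sum']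
          apply Finset.sum_congr rfl
          intro j hj
          have hj' := Finset.mem_range.mp hj
          rw [Matrix.smul_mulVec, Matrix.smul_mulVec, Matrix.mulVec_smul,
            ih (k - n + j) (by omega)]
    have hQe : Q *ᵥ (fun _ => (1:ℚ)) = fun _ => 1 := by
      have h := hQpow 0
      rwa [pow_zero, pow_zero, Matrix.one_mulVec] at h
    have hstep : A * Q * walkMatrix B = Q * (B * walkMatrix B) := by
      have hvec : ∀ j : Fin n, (A * Q * walkMatrix B) *ᵥ Pi.single j 1
          = (Q * (B * walkMatrix B)) *ᵥ Pi.single j 1 := by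
        intro j
        have h1 : (A * Q * walkMatrix B) *ᵥ Pi.single j 1
            = A ^ ((j:ℕ)+1) *ᵥ (fun _ => (1:ℚ)) := by
          calc (A * Q * walkMatrix B) *ᵥ Pi.single j 1
              = (A * Q) *ᵥ walkMatrix B *ᵥ Pi.single j 1 :=
                (Matrix.mulVec_mulVec (Pi.single j 1) (A * Q) (walkMatrix B)).symm
            _ = (A * Q) *ᵥ (B ^ (j:ℕ)) *ᵥ (fun _ => (1:ℚ)) := by rw [walk_col B j]
            _ = A *ᵥ Q *ᵥ (B ^ (j:ℕ)) *ᵥ (fun _ => (1:ℚ)) :=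
                (Matrix.mulVec_mulVec _ A Q).symm
            _ = A *ᵥ (A ^ (j:ℕ)) *ᵥ (fun _ => (1:ℚ)) := by rw [hQpow (j:ℕ)]
            _ = A ^ ((j:ℕ)+1) *ᵥ (fun _ => (1:ℚ)) := by
                rw [Matrix.mulVec_mulVec ((fun _ => (1:ℚ))) A (A ^ (j:ℕ)), ← pow_succ']
        have h2 : (Q * (B * walkMatrix B)) *ᵥ Pi.single j 1
            = A ^ ((j:ℕ)+1) *ᵥ (fun _ => (1:ℚ)) := by
          calc (Q * (B * walkMatrix B)) *ᵥ Pi.single j 1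
              = Q *ᵥ (B * walkMatrix B) *ᵥ Pi.single j 1 :=
                (Matrix.mulVec_mulVec (Pi.single j 1) Q (B * walkMatrix B)).symm
            _ = Q *ᵥ B *ᵥ walkMatrix B *ᵥ Pi.single j 1 := by
                rw [Matrix.mulVec_mulVec (Pi.single j 1) B (walkMatrix B)]
            _ = Q *ᵥ (B ^ ((j:ℕ)+1)) *ᵥ (fun _ => (1:ℚ)) := by
                rw [walk_col B j, Matrix.mulVec_mulVec ((fun _ => (1:ℚ))) B (B ^ (j:ℕ)),
                  ← pow_succ']
            _ = A ^ ((j:ℕ)+1) *ᵥ (fun _ => (1:ℚ)) := hQpow ((j:ℕ)+1)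
        rw [h1, h2]
      ext i j
      rw [entry_eq (A * Q * walkMatrix B) i j, entry_eq (Q * (B * walkMatrix B)) i j, hvec j]
    have hAQ : A * Q = Q * B := by
      have h := congrArg (fun X => X * (walkMatrix B)⁻¹) hstep
      rw [show Q * (B * walkMatrix B) = Q * B * walkMatrix B from
        (Matrix.mul_assoc Q B (walkMatrix B)).symm] at h
      rwa [Matrix.mul_nonsing_inv_cancel_right _ _ hWBu,
        Matrix.mul_nonsing_inv_cancel_right _ _ hWBu] at h
    have hQorth : Qᵀ * Q = 1 := by
      rw [hQdef, Matrix.transpose_mul, Matrix.transpose_nonsing_inv]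
      calc ((walkMatrix B)ᵀ)⁻¹ * (walkMatrix A)ᵀ * (walkMatrix A * (walkMatrix B)⁻¹)
          = ((walkMatrix B)ᵀ)⁻¹ * ((walkMatrix A)ᵀ * walkMatrix A) * (walkMatrix B)⁻¹ := by
            rw [Matrix.mul_assoc ((walkMatrix B)ᵀ)⁻¹ (walkMatrix A)ᵀ _,
              ← Matrix.mul_assoc (walkMatrix A)ᵀ (walkMatrix A) _, ← Matrix.mul_assoc]
        _ = ((walkMatrix B)ᵀ)⁻¹ * ((walkMatrix B)ᵀ * walkMatrix B) * (walkMatrix B)⁻¹ := by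
            rw [hgram]
        _ = 1 := by
            rw [← Matrix.mul_assoc, Matrix.nonsing_inv_mul _ hWBTu, Matrix.one_mul,
              Matrix.mul_nonsing_inv _ hWBu]
    have hQAQ : Qᵀ * A * Q = B := by
      rw [Matrix.mul_assoc, hAQ, ← Matrix.mul_assoc, hQorth, Matrix.one_mul]
    obtain ⟨σ, hσ⟩ := hQall Q hQorth hQe
      (by rw [hQAQ]; exact hBs)
      (by intro i j; rw [hQAQ]; exact adjMat_zero_or_one H i j)
      (by intro i; rw [hQAQ]; exact adjMat_diag H i)
    refine ⟨⟨σ, @fun a b => ?_⟩⟩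
    have hBab : B (σ a) (σ b) = A a b := by
      rw [← hQAQ, hσ, perm_conj_apply, Equiv.symm_apply_apply, Equiv.symm_apply_apply]
    have h2 : (if H.Adj (σ a) (σ b) then (1:ℚ) else 0) = if G.Adj a b then 1 else 0 := by
      rw [← adjMat_apply, ← adjMat_apply, ← hA]
      exact hBab
    exact iff_of_ite h2
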